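/- Under separability of X w.r.t. C*, hierarchical agglomerative clustering with average linkage recovers C*: whenever more than K subsets remain, the pair minimizing average linkage lies within a single ground-truth cluster, so the partition at K subsets equals C*. -/

import Mathlib

open scoped Classical

inductive CTree (α : Type*) where
  | leaf (x : α) : CTree α
  | node (l r : CTree α) : CTree α

namespace CTree

variable {α : Type*}

/-- The set of data points (descendant leaves) of a node. -/
noncomputable def lvs : CTree α → Finset α
  | leaf x => {x}
  | node l r => lvs l ∪ lvs r

theorem lvs_nonempty (t : CTree α) : t.lvs.Nonempty := by
  induction t with
  | leaf x => exact ⟨x, by simp [lvs]⟩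
  | node l r ihl ihr => exact ihl.mono (by simp [lvs])

/-- `Sub s t` : `s` is a subtree (node) of `t`. -/
inductive Sub : CTree α → CTree α → Prop
  | refl (t : CTree α) : Sub t t
  | left {s l r : CTree α} : Sub s l → Sub s (node l r)
  | right {s l r : CTree α} : Sub s r → Sub s (node l r)

/-- Least common ancestor (as a subtree) of two data points. -/
noncomputable def lca : CTree α → α → α → CTree α
  | leaf a, _, _ => leaf a
  | node l r, x, y =>
      if x ∈ lvs l ∧ y ∈ lvs l then lca l x y
      else if x ∈ lvs r ∧ y ∈ lvs r then lca r x y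
      else node l r

/-- Dendrogram purity 1: for every same-cluster pair, all leaves below their
least common ancestor belong to that cluster. -/
def PurityOne (C : α → ℕ) (t : CTree α) : Prop :=
  ∀ x ∈ t.lvs, ∀ y ∈ t.lvs, x ≠ y → C x = C y → ∀ z ∈ (t.lca x y).lvs, C z = C x

/-- A dataset `X` is separable w.r.t. a ground-truth clustering `C`:
every within-cluster distance is strictly smaller than every between-cluster distance. -/
def Separable [MetricSpace α] (X : Finset α) (C : α → ℕ) : Prop :=
  ∀ x ∈ X, ∀ y ∈ X, ∀ x' ∈ X, ∀ y' ∈ X,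
    x ≠ y → C x = C y → C x' ≠ C y' → dist x y < dist x' y'

/-- A node `v` with sibling `v'` and aunt `a` is masked if some `x ∈ lvs v` is farther
from some point of `v'` than from some point of `a`
(i.e. `max_{y ∈ lvs v'} ‖x-y‖ > min_{z ∈ lvs a} ‖x-z‖`). -/
def Masked [MetricSpace α] (v v' a : CTree α) : Prop :=
  ∃ x ∈ v.lvs,
    (a.lvs.inf' (lvs_nonempty a) fun z => dist x z) <
      (v'.lvs.sup' (lvs_nonempty v') fun y => dist x y)

end CTree

abbrev Euc (d : ℕ) := EuclideanSpace ℝ (Fin d)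

/-- One merge step of hierarchical agglomerative clustering with linkage `link`:
two distinct current subsets minimizing the linkage over all current pairs are merged. -/
inductive HACStep {α : Type*} (link : Finset α → Finset α → ℝ) :
    Finset (Finset α) → Finset (Finset α) → Prop
  | merge (P : Finset (Finset α)) (A B : Finset α)
      (hA : A ∈ P) (hB : B ∈ P) (hne : A ≠ B)
      (hmin : ∀ A' ∈ P, ∀ B' ∈ P, A' ≠ B' → link A B ≤ link A' B') :
      HACStep link P (insert (A ∪ B) ((P.erase A).erase B))

/-- Single linkage: minimum pairwise distance between the two subsets. -/
noncomputable def singleLink {α : Type*} [MetricSpace α] (A B : Finset α) : ℝ :=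
  sInf (Set.image2 dist (↑A : Set α) (↑B : Set α))

/-- Complete linkage: maximum pairwise distance between the two subsets. -/
noncomputable def completeLink {α : Type*} [MetricSpace α] (A B : Finset α) : ℝ :=
  sSup (Set.image2 dist (↑A : Set α) (↑B : Set α))

/-- Average linkage: average pairwise distance between the two subsets. -/
noncomputable def averageLink {α : Type*} [MetricSpace α] (A B : Finset α) : ℝ :=
  (∑ a ∈ A, ∑ b ∈ B, dist a b) / ((A.card : ℝ) * (B.card : ℝ))

section AuxHAC

open Finset

variable {α : Type*}

/-- Label of a nonempty finset via a chosen element. -/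
noncomputable def finsetLabel (C : α → ℕ) (S : Finset α) : ℕ :=
  if h : S.Nonempty then C h.choose else 0

lemma finsetLabel_eq (C : α → ℕ) {S : Finset α}
    (hpure : ∀ a ∈ S, ∀ b ∈ S, C a = C b) {s : α} (hs : s ∈ S) :
    C s = finsetLabel C S := by
  have hne : S.Nonempty := ⟨s, hs⟩
  rw [finsetLabel, dif_pos hne]
  exact hpure s hs _ hne.choose_spec

lemma finsetLabel_mem (C : α → ℕ) {X S : Finset α} (hsub : S ⊆ X) (hne : S.Nonempty) :
    finsetLabel C S ∈ X.image C := by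
  rw [finsetLabel, dif_pos hne]
  exact Finset.mem_image_of_mem C (hsub hne.choose_spec)

/-- The invariant maintained by average-linkage HAC under separability. -/
def HACInv (X : Finset α) (C : α → ℕ) (P : Finset (Finset α)) : Prop :=
  (∀ A ∈ P, A ⊆ X) ∧ (∀ A ∈ P, A.Nonempty) ∧
  (∀ A ∈ P, ∀ B ∈ P, A ≠ B → Disjoint A B) ∧
  (∀ x ∈ X, ∃ A ∈ P, x ∈ A) ∧
  ((X.image C).card ≤ P.card → ∀ A ∈ P, ∀ a ∈ A, ∀ b ∈ A, C a = C b)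

/-- Strict comparison of average linkage between a same-cluster pair and a
cross-cluster pair, under separability. -/
lemma averageLink_lt_averageLink [MetricSpace α] {X : Finset α} {C : α → ℕ}
    (hsep : CTree.Separable X C)
    {A B A' B' : Finset α} (hA : A ⊆ X) (hB : B ⊆ X) (hA' : A' ⊆ X) (hB' : B' ⊆ X)
    (hAne : A.Nonempty) (hBne : B.Nonempty) (hA'ne : A'.Nonempty) (hB'ne : B'.Nonempty)
    (hdisj : Disjoint A B)
    (hsame : ∀ a ∈ A, ∀ b ∈ B, C a = C b)
    (hdiff : ∀ a ∈ A', ∀ b ∈ B', C a ≠ C b) :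
    averageLink A B < averageLink A' B' := by
  obtain ⟨p, hp, hpmin⟩ := (A' ×ˢ B').exists_min_image (fun p => dist p.1 p.2)
    (hA'ne.product hB'ne)
  obtain ⟨hp1, hp2⟩ := Finset.mem_product.1 hp
  set m := dist p.1 p.2 with hm
  have h1 : averageLink A B < m := by
    rw [averageLink, div_lt_iff₀ (by positivity)]
    calc ∑ a ∈ A, ∑ b ∈ B, dist a b < ∑ a ∈ A, ∑ b ∈ B, m := by
          refine Finset.sum_lt_sum_of_nonempty hAne fun a ha => ?_
          refine Finset.sum_lt_sum_of_nonempty hBne fun b hb => ?_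
          exact hsep a (hA ha) b (hB hb) p.1 (hA' hp1) p.2 (hB' hp2)
            (by rintro rfl; exact Finset.disjoint_left.1 hdisj ha hb)
            (hsame a ha b hb) (hdiff p.1 hp1 p.2 hp2)
      _ = m * ((A.card : ℝ) * B.card) := by
          simp [Finset.sum_const, nsmul_eq_mul]; ring
  have h2 : m ≤ averageLink A' B' := by
    rw [averageLink, le_div_iff₀ (by positivity)]
    calc m * ((A'.card : ℝ) * B'.card) = ∑ a ∈ A', ∑ b ∈ B', m := by
          simp [Finset.sum_const, nsmul_eq_mul]; ring
      _ ≤ ∑ a ∈ A', ∑ b ∈ B', dist a b :=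
          Finset.sum_le_sum fun a ha => Finset.sum_le_sum fun b hb =>
            hpmin (a, b) (Finset.mem_product.2 ⟨ha, hb⟩)
  linarith

lemma hacStep_card {link : Finset α → Finset α → ℝ} {X : Finset α} {C : α → ℕ}
    {P Q : Finset (Finset α)} (hinv : HACInv X C P) (h : HACStep link P Q) :
    P.card = Q.card + 1 := by
  obtain ⟨hsub, hnon, hdisj, hcov, hpure⟩ := hinv
  cases h with
  | merge A B hA hB hne hmin =>
    have hBA : B ∈ P.erase A := Finset.mem_erase.2 ⟨hne.symm, hB⟩
    have hnotmem : A ∪ B ∉ (P.erase A).erase B := by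
      intro hmem
      have h1 := Finset.mem_erase.1 hmem
      have h2 := Finset.mem_erase.1 h1.2
      have hd : Disjoint A (A ∪ B) := hdisj A hA _ h2.2 (fun h => h2.1 h.symm)
      obtain ⟨a, ha⟩ := hnon A hA
      exact Finset.disjoint_left.1 hd ha (Finset.mem_union_left _ ha)
    have h2lt : 1 < P.card := Finset.one_lt_card.2 ⟨A, hA, B, hB, hne⟩
    rw [Finset.card_insert_of_notMem hnotmem, Finset.card_erase_of_mem hBA,
      Finset.card_erase_of_mem hA]
    omega

lemma hacInv_step [MetricSpace α] {X : Finset α} {C : α → ℕ}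
    (hsep : CTree.Separable X C) {P Q : Finset (Finset α)}
    (hinv : HACInv X C P) (h : HACStep averageLink P Q) : HACInv X C Q := by
  have hcard := hacStep_card hinv h
  obtain ⟨hsub, hnon, hdisj, hcov, hpure⟩ := hinv
  cases h with
  | merge A B hA hB hne hmin =>
    have hmemQ : ∀ S, S ∈ insert (A ∪ B) ((P.erase A).erase B) ↔
        S = A ∪ B ∨ (S ∈ P ∧ S ≠ B ∧ S ≠ A) := by
      intro S
      simp only [Finset.mem_insert, Finset.mem_erase]
      tauto
    refine ⟨?_, ?_, ?_, ?_, ?_⟩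
    · intro S hS
      rcases (hmemQ S).1 hS with rfl | ⟨hSP, _, _⟩
      · exact Finset.union_subset (hsub A hA) (hsub B hB)
      · exact hsub S hSP
    · intro S hS
      rcases (hmemQ S).1 hS with rfl | ⟨hSP, _, _⟩
      · exact (hnon A hA).mono Finset.subset_union_left
      · exact hnon S hSP
    · intro S hS T hT hST
      rcases (hmemQ S).1 hS with rfl | ⟨hSP, hSB, hSA⟩ <;>
        rcases (hmemQ T).1 hT with rfl | ⟨hTP, hTB, hTA⟩
      · exact absurd rfl hST
      · exact Finset.disjoint_union_left.2
          ⟨hdisj A hA T hTP (fun h => hTA h.symm), hdisj B hB T hTP (fun h => hTB h.symm)⟩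
      · exact Finset.disjoint_union_right.2
          ⟨hdisj S hSP A hA hSA, hdisj S hSP B hB hSB⟩
      · exact hdisj S hSP T hTP hST
    · intro x hx
      obtain ⟨S, hSP, hxS⟩ := hcov x hx
      by_cases hSA : S = A
      · exact ⟨A ∪ B, (hmemQ _).2 (Or.inl rfl), Finset.mem_union_left _ (hSA ▸ hxS)⟩
      by_cases hSB : S = B
      · exact ⟨A ∪ B, (hmemQ _).2 (Or.inl rfl), Finset.mem_union_right _ (hSB ▸ hxS)⟩
      · exact ⟨S, (hmemQ _).2 (Or.inr ⟨hSP, hSB, hSA⟩), hxS⟩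
    · intro hK
      have hKP : (X.image C).card < P.card := by omega
      have hpureP := hpure hKP.le
      -- pigeonhole: two distinct members of P carry the same label
      have himg : P.image (finsetLabel C) ⊆ X.image C := by
        intro c hc
        obtain ⟨S, hSP, rfl⟩ := Finset.mem_image.1 hc
        exact finsetLabel_mem C (hsub S hSP) (hnon S hSP)
      have hninj : ¬ Set.InjOn (finsetLabel C) (P : Set (Finset α)) := by
        intro hinj
        have := Finset.card_image_of_injOn hinj
        have := Finset.card_le_card himg
        omega
      rw [Set.InjOn] at hninj
      push_neg at hninj
      obtain ⟨A₀, hA₀, B₀, hB₀, hlab, hne₀⟩ := hninj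
      have hA₀P : A₀ ∈ P := hA₀
      have hB₀P : B₀ ∈ P := hB₀
      -- the merged pair must be same-cluster
      have hABsame : ∀ a ∈ A, ∀ b ∈ B, C a = C b := by
        by_contra hcon
        push_neg at hcon
        obtain ⟨a, ha, b, hb, hab⟩ := hcon
        have hdiffAB : ∀ a' ∈ A, ∀ b' ∈ B, C a' ≠ C b' := by
          intro a' ha' b' hb' h
          exact hab ((hpureP A hA a ha a' ha').trans (h.trans (hpureP B hB b' hb' b hb)))
        have hsame₀ : ∀ a ∈ A₀, ∀ b ∈ B₀, C a = C b := by
          intro a ha b hb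
          rw [finsetLabel_eq C (hpureP A₀ hA₀P) ha, finsetLabel_eq C (hpureP B₀ hB₀P) hb,
            hlab]
        have hlt := averageLink_lt_averageLink hsep (hsub A₀ hA₀P) (hsub B₀ hB₀P)
          (hsub A hA) (hsub B hB) (hnon A₀ hA₀P) (hnon B₀ hB₀P) (hnon A hA) (hnon B hB)
          (hdisj A₀ hA₀P B₀ hB₀P hne₀) hsame₀ hdiffAB
        exact absurd (hmin A₀ hA₀P B₀ hB₀P hne₀) (not_le.2 hlt)
      intro S hS a ha b hb
      rcases (hmemQ S).1 hS with rfl | ⟨hSP, _, _⟩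
      · rcases Finset.mem_union.1 ha with ha' | ha' <;>
          rcases Finset.mem_union.1 hb with hb' | hb'
        · exact hpureP A hA a ha' b hb'
        · exact hABsame a ha' b hb'
        · exact (hABsame b hb' a ha').symm
        · exact hpureP B hB a ha' b hb'
      · exact hpureP S hSP a ha b hb

lemma hacInv_final {X : Finset α} {C : α → ℕ} {P : Finset (Finset α)}
    (hinv : HACInv X C P) (hK : P.card = (X.image C).card) :
    P = X.image fun x => X.filter fun y => C y = C x := by
  obtain ⟨hsub, hnon, hdisj, hcov, hpureI⟩ := hinv
  have hpure := hpureI hK.ge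
  have himg : P.image (finsetLabel C) = X.image C := by
    apply Finset.Subset.antisymm
    · intro c hc
      obtain ⟨S, hSP, rfl⟩ := Finset.mem_image.1 hc
      exact finsetLabel_mem C (hsub S hSP) (hnon S hSP)
    · intro c hc
      obtain ⟨x, hx, rfl⟩ := Finset.mem_image.1 hc
      obtain ⟨S, hSP, hxS⟩ := hcov x hx
      exact Finset.mem_image.2 ⟨S, hSP, (finsetLabel_eq C (hpure S hSP) hxS).symm⟩
  have hinj : Set.InjOn (finsetLabel C) (P : Set (Finset α)) :=
    Finset.card_image_iff.1 (by rw [himg, ← hK])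
  have key : ∀ S ∈ P, ∀ s ∈ S, S = X.filter fun y => C y = C s := by
    intro S hSP s hs
    ext y
    simp only [Finset.mem_filter]
    constructor
    · intro hy
      exact ⟨hsub S hSP hy, hpure S hSP y hy s hs⟩
    · rintro ⟨hyX, hCy⟩
      obtain ⟨T, hTP, hyT⟩ := hcov y hyX
      have : finsetLabel C T = finsetLabel C S := by
        rw [← finsetLabel_eq C (hpure T hTP) hyT, ← finsetLabel_eq C (hpure S hSP) hs, hCy]
      exact hinj hTP hSP this ▸ hyT
  ext S
  constructor
  · intro hSP
    obtain ⟨s, hs⟩ := hnon S hSP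
    exact Finset.mem_image.2 ⟨s, hsub S hSP hs, (key S hSP s hs).symm⟩
  · intro hS
    obtain ⟨x, hxX, rfl⟩ := Finset.mem_image.1 hS
    obtain ⟨T, hTP, hxT⟩ := hcov x hxX
    have hCx : C x = C x := rfl
    rw [← key T hTP x hxT]
    exact hTP

end AuxHAC

open CTree in
/-- under separability, hierarchical agglomerative clustering with
average linkage only merges subsets lying in a common ground-truth cluster while more
than `K` subsets remain, so every reachable partition with at least `K` subsets is
cluster-pure, and the reachable partition with exactly `K` subsets is exactly the
ground-truth clustering. -/
theorem average_linkage_recovers_ground_truth {d : ℕ} (X : Finset (Euc d))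
    (C : Euc d → ℕ) (hsep : Separable X C) :
    (∀ P, Relation.ReflTransGen (HACStep (averageLink))
        (X.image fun x => ({x} : Finset (Euc d))) P →
      (X.image C).card ≤ P.card → ∀ A ∈ P, ∀ a ∈ A, ∀ b ∈ A, C a = C b) ∧
    (∀ P, Relation.ReflTransGen (HACStep (averageLink))
        (X.image fun x => ({x} : Finset (Euc d))) P →
      P.card = (X.image C).card →
      P = X.image fun x => X.filter fun y => C y = C x) := by
  have hinv0 : HACInv X C (X.image fun x => ({x} : Finset (Euc d))) := by
    refine ⟨?_, ?_, ?_, ?_, ?_⟩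
    · intro A hA
      obtain ⟨x, hx, rfl⟩ := Finset.mem_image.1 hA
      exact Finset.singleton_subset_iff.2 hx
    · intro A hA
      obtain ⟨x, hx, rfl⟩ := Finset.mem_image.1 hA
      exact ⟨x, Finset.mem_singleton_self x⟩
    · intro A hA B hB hAB
      obtain ⟨x, hx, rfl⟩ := Finset.mem_image.1 hA
      obtain ⟨y, hy, rfl⟩ := Finset.mem_image.1 hB
      exact Finset.disjoint_singleton.2 (fun h => hAB (by rw [h]))
    · intro x hx
      exact ⟨{x}, Finset.mem_image_of_mem _ hx, Finset.mem_singleton_self x⟩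
    · intro _ A hA a ha b hb
      obtain ⟨x, hx, rfl⟩ := Finset.mem_image.1 hA
      rw [Finset.mem_singleton.1 ha, Finset.mem_singleton.1 hb]
  have hreach : ∀ P, Relation.ReflTransGen (HACStep (averageLink))
      (X.image fun x => ({x} : Finset (Euc d))) P → HACInv X C P := by
    intro P h
    induction h with
    | refl => exact hinv0
    | tail _ h2 ih => exact hacInv_step hsep ih h2
  constructor
  · intro P hP hK
    exact (hreach P hP).2.2.2.2 hK
  · intro P hP hK
    convert hacInv_final (hreach P hP) hK using 2
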